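/- For all integers j < k, cos(α_j) · G(j+1,k) < G(j,k). -/

import Mathlib

/-- Auxiliary recursion: `Gaux s α j n` corresponds to `G(j, j-1+n)`. -/
noncomputable def Gaux (s α : ℤ → ℝ) (j : ℤ) : ℕ → ℝ
  | 0 => 0
  | 1 => 1
  | (n+2) => (2 * s (j + n) + Real.cos (α (j + n)) + Real.cos (α (j + n + 1))) * Gaux s α j (n+1)
      - (Real.cos (α (j + n)))^2 * Gaux s α j n

/-- `G s α j k` is the recursively defined quantity `G(j,k)`, with `G(j,j-1)=0`, `G(j,j)=1`,
`G(j,k) = (2 s_{k-1} + cos α_{k-1} + cos α_k) G(j,k-1) − cos²(α_{k-1}) G(j,k-2)` for `k ≥ j+1`. -/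
noncomputable def G (s α : ℤ → ℝ) (j k : ℤ) : ℝ := Gaux s α j (k - (j-1)).toNat

/-- `Pprod α a b = ∏_{i=a}^{b-1} cos (α i)`. -/
noncomputable def Pprod (α : ℤ → ℝ) (a b : ℤ) : ℝ := ∏ i ∈ Finset.Ico a b, Real.cos (α i)

lemma Gaux_key (s α : ℤ → ℝ) (hs : ∀ i, 0 < s i) (hα : ∀ i, 0 < Real.cos (α i)) (j : ℤ) :
    ∀ n : ℕ, (0 < Gaux s α j (n+1) - Real.cos (α j) * Gaux s α (j+1) n) ∧
      Real.cos (α (j + n + 1)) * (Gaux s α j (n+1) - Real.cos (α j) * Gaux s α (j+1) n)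
        < Gaux s α j (n+2) - Real.cos (α j) * Gaux s α (j+1) (n+1) := by
  intro n
  induction n with
  | zero =>
    simp only [Gaux, Nat.cast_zero, add_zero, mul_zero, sub_zero, mul_one, mul_zero]
    constructor
    · norm_num
    · have := hs j
      have := hα (j + 1)
      nlinarith
  | succ n ih =>
    obtain ⟨h1, h2⟩ := ih
    have hc1 := hα (j + n + 1)
    have hc2 := hα (j + n + 2)
    have hsn := hs (j + n + 1)
    have hpos : 0 < Gaux s α j (n+1+1) - Real.cos (α j) * Gaux s α (j+1) (n+1) := by
      calc (0:ℝ) < Real.cos (α (j + n + 1)) *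
            (Gaux s α j (n+1) - Real.cos (α j) * Gaux s α (j+1) n) := by positivity
        _ < _ := h2
    refine ⟨hpos, ?_⟩
    have e1 : Gaux s α j (n+3) = (2 * s (j + n + 1) + Real.cos (α (j + n + 1))
        + Real.cos (α (j + n + 2))) * Gaux s α j (n+2)
        - (Real.cos (α (j + n + 1)))^2 * Gaux s α j (n+1) := by
      show Gaux s α j ((n+1)+2) = _
      rw [Gaux]
      push_cast
      ring_nf
    have e2 : Gaux s α (j+1) (n+2) = (2 * s (j + n + 1) + Real.cos (α (j + n + 1))
        + Real.cos (α (j + n + 2))) * Gaux s α (j+1) (n+1)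
        - (Real.cos (α (j + n + 1)))^2 * Gaux s α (j+1) n := by
      rw [Gaux]
      ring_nf
    have goal' : Real.cos (α (j + n + 2)) *
        (Gaux s α j (n+2) - Real.cos (α j) * Gaux s α (j+1) (n+1)) <
        Gaux s α j (n+3) - Real.cos (α j) * Gaux s α (j+1) (n+2) := by
      rw [e1, e2]
      nlinarith [mul_pos hc1 h1]
    have harg : j + ((n:ℤ)+1) + 1 = j + n + 2 := by ring
    push_cast
    rw [harg]
    exact goal'

theorem stmt7 (s α : ℤ → ℝ) (hs : ∀ i, 0 < s i) (hα : ∀ i, 0 < Real.cos (α i))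
    (j k : ℤ) (hjk : j < k) :
    Real.cos (α j) * G s α (j+1) k < G s α j k := by
  have h := (Gaux_key s α hs hα j (k - j).toNat).1
  unfold G
  have h1 : (k - (j-1)).toNat = (k - j).toNat + 1 := by omega
  have h2 : (k - ((j+1)-1)).toNat = (k - j).toNat := by omega
  rw [h1, h2]
  linarith
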